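/- arXiv:0801.1620 — 6 statements merged into one kernel-verified Lean document; each statement's English description precedes it below -/
import Mathlib

section
/- Fix an integer r ≥ 3 and let I = {0, 1/2, 1, ..., (r-2)/2}. Call a triple (i,j,k) ∈ I³ admissible if i ≤ j+k, j ≤ k+i, k ≤ i+j, i+j+k ∈ ℕ, and i+j+k ≤ r-2. Then for any admissible triples (i,j,k) and (i,m,n) sharing the entry i, there exists l ∈ I such that both (j,m,l) and (k,n,l) are admissible. -/
/-- Membership in the color set `I = {0, 1/2, 1, ..., (r-2)/2}` of half-integers. -/
def TVColor (r : ℕ) (x : ℚ) : Prop :=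
  (∃ n : ℕ, x = (n : ℚ) / 2) ∧ x ≤ ((r : ℚ) - 2) / 2

/-- Admissibility of a triple for the Turaev–Viro datum of order `r`:
triangle inequalities, integral sum, and sum at most `r - 2`. -/
def TVAdm (r : ℕ) (a b c : ℚ) : Prop :=
  a ≤ b + c ∧ b ≤ c + a ∧ c ≤ a + b ∧
    (∃ n : ℕ, a + b + c = (n : ℚ)) ∧ a + b + c ≤ (r : ℚ) - 2

/-- Core combinatorial lemma on doubled colors: `F = max (|B-D|) (|C-E|)` works. -/
lemma tv_core (R A B C D E : ℕ)
    (hB : B ≤ R) (hD : D ≤ R) (hC : C ≤ R) (hE : E ≤ R)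
    (t1 : A ≤ B + C) (t2 : B ≤ C + A) (t3 : C ≤ A + B)
    (t4 : A ≤ D + E) (t5 : D ≤ E + A) (t6 : E ≤ A + D)
    (s1 : A + B + C ≤ 2 * R) (s2 : A + D + E ≤ 2 * R)
    (p1 : (A + B + C) % 2 = 0) (p2 : (A + D + E) % 2 = 0) :
    ∃ F q1 q2 : ℕ, F ≤ R ∧
      B ≤ D + F ∧ D ≤ F + B ∧ F ≤ B + D ∧ B + D + F = 2 * q1 ∧ B + D + F ≤ 2 * R ∧
      C ≤ E + F ∧ E ≤ F + C ∧ F ≤ C + E ∧ C + E + F = 2 * q2 ∧ C + E + F ≤ 2 * R := by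
  refine ⟨max (max B D - min B D) (max C E - min C E),
    (B + D + max (max B D - min B D) (max C E - min C E)) / 2,
    (C + E + max (max B D - min B D) (max C E - min C E)) / 2, ?_⟩
  omega

set_option maxHeartbeats 1000000 in
/-- Condition (ii) of strong irreducibility for the Turaev–Viro datum of order `r`:
given admissible triples `(i,j,k)` and `(i,m,n)` sharing the entry `i`, there is a
color `l` such that `(j,m,l)` and `(k,n,l)` are admissible. -/
theorem tv_strong_irreducibility_ii (r : ℕ) (hr : 3 ≤ r) (i j k m n : ℚ)
    (hi : TVColor r i) (hj : TVColor r j) (hk : TVColor r k)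
    (hm : TVColor r m) (hn : TVColor r n)
    (h1 : TVAdm r i j k) (h2 : TVAdm r i m n) :
    ∃ l : ℚ, TVColor r l ∧ TVAdm r j m l ∧ TVAdm r k n l := by
  obtain ⟨⟨A, hA⟩, hi2⟩ := hi
  obtain ⟨⟨B, hB⟩, hj2⟩ := hj
  obtain ⟨⟨C, hC⟩, hk2⟩ := hk
  obtain ⟨⟨D, hD⟩, hm2⟩ := hm
  obtain ⟨⟨E, hE⟩, hn2⟩ := hn
  obtain ⟨h11, h12, h13, ⟨n1, hn1⟩, h15⟩ := h1
  obtain ⟨h21, h22, h23, ⟨n2, hn2⟩, h25⟩ := h2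
  set R : ℕ := r - 2 with hR
  have hRQ : (R : ℚ) = (r : ℚ) - 2 := by
    have : (2:ℕ) ≤ r := by omega
    push_cast [hR, Nat.cast_sub this]; ring
  subst hA hB hC hD hE
  -- translate all hypotheses to ℕ
  have hB' : B ≤ R := by
    have : (B : ℚ) ≤ (R : ℚ) := by rw [hRQ]; linarith
    exact_mod_cast this
  have hC' : C ≤ R := by
    have : (C : ℚ) ≤ (R : ℚ) := by rw [hRQ]; linarith
    exact_mod_cast this
  have hD' : D ≤ R := by
    have : (D : ℚ) ≤ (R : ℚ) := by rw [hRQ]; linarith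
    exact_mod_cast this
  have hE' : E ≤ R := by
    have : (E : ℚ) ≤ (R : ℚ) := by rw [hRQ]; linarith
    exact_mod_cast this
  have t1 : A ≤ B + C := by
    have : (A : ℚ) ≤ (B : ℚ) + C := by linarith
    exact_mod_cast this
  have t2 : B ≤ C + A := by
    have : (B : ℚ) ≤ (C : ℚ) + A := by linarith
    exact_mod_cast this
  have t3 : C ≤ A + B := by
    have : (C : ℚ) ≤ (A : ℚ) + B := by linarith
    exact_mod_cast this
  have t4 : A ≤ D + E := by
    have : (A : ℚ) ≤ (D : ℚ) + E := by linarith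
    exact_mod_cast this
  have t5 : D ≤ E + A := by
    have : (D : ℚ) ≤ (E : ℚ) + A := by linarith
    exact_mod_cast this
  have t6 : E ≤ A + D := by
    have : (E : ℚ) ≤ (A : ℚ) + D := by linarith
    exact_mod_cast this
  have e1 : A + B + C = 2 * n1 := by
    have : ((A:ℚ) + B + C) = 2 * n1 := by linarith
    exact_mod_cast this
  have e2 : A + D + E = 2 * n2 := by
    have : ((A:ℚ) + D + E) = 2 * n2 := by linarith
    exact_mod_cast this
  have s1 : A + B + C ≤ 2 * R := by
    have : ((A:ℚ) + B + C) ≤ 2 * R := by rw [hRQ]; linarith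
    exact_mod_cast this
  have s2 : A + D + E ≤ 2 * R := by
    have : ((A:ℚ) + D + E) ≤ 2 * R := by rw [hRQ]; linarith
    exact_mod_cast this
  obtain ⟨F, q1, q2, hF, u1, u2, u3, u4, u5, v1, v2, v3, v4, v5⟩ :=
    tv_core R A B C D E hB' hD' hC' hE' t1 t2 t3 t4 t5 t6 s1 s2
      (by omega) (by omega)
  refine ⟨(F : ℚ) / 2, ⟨⟨F, rfl⟩, ?_⟩, ⟨?_, ?_, ?_, ⟨q1, ?_⟩, ?_⟩,
    ⟨?_, ?_, ?_, ⟨q2, ?_⟩, ?_⟩⟩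
  · rw [← hRQ]; have : (F:ℚ) ≤ R := by exact_mod_cast hF
    linarith
  · have : (B:ℚ) ≤ (D:ℚ) + F := by exact_mod_cast u1
    linarith
  · have : (D:ℚ) ≤ (F:ℚ) + B := by exact_mod_cast u2
    linarith
  · have : (F:ℚ) ≤ (B:ℚ) + D := by exact_mod_cast u3
    linarith
  · have : ((B:ℚ) + D + F) = 2 * q1 := by exact_mod_cast u4
    linarith
  · have h : ((B:ℚ) + D + F) ≤ 2 * R := by exact_mod_cast u5
    rw [hRQ] at h; linarith
  · have : (C:ℚ) ≤ (E:ℚ) + F := by exact_mod_cast v1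
    linarith
  · have : (E:ℚ) ≤ (F:ℚ) + C := by exact_mod_cast v2
    linarith
  · have : (F:ℚ) ≤ (C:ℚ) + E := by exact_mod_cast v3
    linarith
  · have : ((C:ℚ) + E + F) = 2 * q2 := by exact_mod_cast v4
    linarith
  · have h : ((C:ℚ) + E + F) ≤ 2 * R := by exact_mod_cast v5
    rw [hRQ] at h; linarith
end

section
/- Fix an integer r ≥ 3 and let I = {0, 1/2, 1, ..., (r-2)/2} with admissibility of a triple (i,j,k) defined by the triangle inequalities, i+j+k ∈ ℕ, and i+j+k ≤ r-2. Suppose the seven triples (i,j,k), (i,i₁,k₁), (i,i₂,k₂), (j,i₁,j₁), (j,i₂,j₂), (k,j₁,k₁), (k,j₂,k₂) are all admissible. Then there exists l ∈ I such that the triples (i₁,i₂,l), (j₁,j₂,l), and (k₁,k₂,l) are all admissible. -/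
lemma TVColor.nonneg {r : ℕ} {x : ℚ} (h : TVColor r x) : 0 ≤ x := by
  obtain ⟨⟨n, hn⟩, -⟩ := h
  rw [hn]; positivity

lemma TVAdm.rot {r : ℕ} {a b c : ℚ} (h : TVAdm r a b c) : TVAdm r b c a := by
  obtain ⟨h1, h2, h3, ⟨n, hn⟩, h5⟩ := h
  exact ⟨by linarith, by linarith, by linarith, ⟨n, by linarith⟩, by linarith⟩

lemma TVAdm.swap {r : ℕ} {a b c : ℚ} (h : TVAdm r a b c) : TVAdm r b a c := by
  obtain ⟨h1, h2, h3, ⟨n, hn⟩, h5⟩ := h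
  exact ⟨by linarith, by linarith, by linarith, ⟨n, by linarith⟩, by linarith⟩

lemma TVAdm.swap23 {r : ℕ} {a b c : ℚ} (h : TVAdm r a b c) : TVAdm r a c b :=
  h.rot.rot.swap

lemma exists_nat_eq (x : ℚ) (z : ℤ) (hz : x = (z : ℚ)) (h0 : 0 ≤ x) : ∃ n : ℕ, x = (n : ℚ) := by
  refine ⟨z.toNat, ?_⟩
  rw [hz] at h0 ⊢
  have hz0 : 0 ≤ z := by exact_mod_cast h0
  exact_mod_cast (Int.toNat_of_nonneg hz0).symm

/-- Main auxiliary lemma: the case where `i₁ - i₂` is the largest difference. -/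
lemma tv_aux (r : ℕ) (hr : 3 ≤ r)
    (i j k i₁ i₂ j₁ j₂ k₁ k₂ : ℚ)
    (hi : TVColor r i) (hj : TVColor r j) (hk : TVColor r k)
    (hi₁ : TVColor r i₁) (hi₂ : TVColor r i₂) (hj₁ : TVColor r j₁)
    (hj₂ : TVColor r j₂) (hk₁ : TVColor r k₁) (hk₂ : TVColor r k₂)
    (h1 : TVAdm r i j k) (h2 : TVAdm r i i₁ k₁) (h3 : TVAdm r i i₂ k₂)
    (h4 : TVAdm r j i₁ j₁) (h5 : TVAdm r j i₂ j₂)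
    (h6 : TVAdm r k j₁ k₁) (h7 : TVAdm r k j₂ k₂)
    (hs : i₂ ≤ i₁) (hA : |j₁ - j₂| ≤ i₁ - i₂) (hB : |k₁ - k₂| ≤ i₁ - i₂) :
    TVColor r (i₁ - i₂) ∧ TVAdm r i₁ i₂ (i₁ - i₂) ∧ TVAdm r j₁ j₂ (i₁ - i₂) ∧
      TVAdm r k₁ k₂ (i₁ - i₂) := by
  obtain ⟨hA1, hA2⟩ := abs_sub_le_iff.mp hA
  obtain ⟨hB1, hB2⟩ := abs_sub_le_iff.mp hB
  have hjn := hj.nonneg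
  have hin := hi.nonneg
  have hkn := hk.nonneg
  have hi₁n := hi₁.nonneg
  have hi₂n := hi₂.nonneg
  have hj₁n := hj₁.nonneg
  have hj₂n := hj₂.nonneg
  have hk₁n := hk₁.nonneg
  have hk₂n := hk₂.nonneg
  obtain ⟨⟨ai, hai⟩, hib⟩ := hi
  obtain ⟨⟨aj, haj⟩, hjb⟩ := hj
  obtain ⟨⟨ai1, hai1⟩, hi1b⟩ := hi₁
  obtain ⟨⟨ai2, hai2⟩, hi2b⟩ := hi₂
  obtain ⟨h2a, h2b, h2c, ⟨n2, h2n⟩, h2s⟩ := h2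
  obtain ⟨h3a, h3b, h3c, ⟨n3, h3n⟩, h3s⟩ := h3
  obtain ⟨h4a, h4b, h4c, ⟨n4, h4n⟩, h4s⟩ := h4
  obtain ⟨h5a, h5b, h5c, ⟨n5, h5n⟩, h5s⟩ := h5
  refine ⟨⟨⟨ai1 - ai2, ?_⟩, by linarith⟩, ?_, ?_, ?_⟩
  · have hle : ai2 ≤ ai1 := by
      have : (ai2 : ℚ) ≤ (ai1 : ℚ) := by rw [hai1, hai2] at hs; linarith
      exact_mod_cast this
    push_cast [Nat.cast_sub hle]
    rw [hai1, hai2]; ring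
  · refine ⟨by linarith, by linarith, by linarith, ?_, by linarith⟩
    refine exists_nat_eq _ ((ai1 : ℤ)) ?_ (by linarith)
    push_cast; rw [hai1]; ring
  · refine ⟨by linarith, by linarith, by linarith, ?_, by linarith⟩
    refine exists_nat_eq _ ((n4 : ℤ) + n5 - aj - ai2) ?_ (by linarith)
    push_cast; linarith [h4n, h5n, haj, hai2]
  · refine ⟨by linarith, by linarith, by linarith, ?_, by linarith⟩
    refine exists_nat_eq _ ((n2 : ℤ) + n3 - ai - ai2) ?_ (by linarith)
    push_cast; linarith [h2n, h3n, hai, hai2]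

/-- Version of the auxiliary lemma with absolute values, handling both orderings. -/
lemma tv_aux2 (r : ℕ) (hr : 3 ≤ r)
    (i j k i₁ i₂ j₁ j₂ k₁ k₂ : ℚ)
    (hi : TVColor r i) (hj : TVColor r j) (hk : TVColor r k)
    (hi₁ : TVColor r i₁) (hi₂ : TVColor r i₂) (hj₁ : TVColor r j₁)
    (hj₂ : TVColor r j₂) (hk₁ : TVColor r k₁) (hk₂ : TVColor r k₂)
    (h1 : TVAdm r i j k) (h2 : TVAdm r i i₁ k₁) (h3 : TVAdm r i i₂ k₂)
    (h4 : TVAdm r j i₁ j₁) (h5 : TVAdm r j i₂ j₂)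
    (h6 : TVAdm r k j₁ k₁) (h7 : TVAdm r k j₂ k₂)
    (hA : |j₁ - j₂| ≤ |i₁ - i₂|) (hB : |k₁ - k₂| ≤ |i₁ - i₂|) :
    ∃ l : ℚ, TVColor r l ∧ TVAdm r i₁ i₂ l ∧ TVAdm r j₁ j₂ l ∧ TVAdm r k₁ k₂ l := by
  rcases le_total i₂ i₁ with hs | hs
  · rw [abs_of_nonneg (by linarith : (0:ℚ) ≤ i₁ - i₂)] at hA hB
    obtain ⟨c, a1, a2, a3⟩ := tv_aux r hr i j k i₁ i₂ j₁ j₂ k₁ k₂ hi hj hk hi₁ hi₂ hj₁ hj₂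
      hk₁ hk₂ h1 h2 h3 h4 h5 h6 h7 hs hA hB
    exact ⟨i₁ - i₂, c, a1, a2, a3⟩
  · rw [abs_sub_comm i₁ i₂, abs_of_nonneg (by linarith : (0:ℚ) ≤ i₂ - i₁)] at hA hB
    rw [abs_sub_comm j₁ j₂] at hA
    rw [abs_sub_comm k₁ k₂] at hB
    obtain ⟨c, a1, a2, a3⟩ := tv_aux r hr i j k i₂ i₁ j₂ j₁ k₂ k₁ hi hj hk hi₂ hi₁ hj₂ hj₁
      hk₂ hk₁ h1 h3 h2 h5 h4 h7 h6 hs hA hB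
    exact ⟨i₂ - i₁, c, a1.swap, a2.swap, a3.swap⟩

/-- Condition (iii) of strong irreducibility for the Turaev–Viro datum of order `r`. -/
theorem tv_strong_irreducibility_iii (r : ℕ) (hr : 3 ≤ r)
    (i j k i₁ i₂ j₁ j₂ k₁ k₂ : ℚ)
    (hi : TVColor r i) (hj : TVColor r j) (hk : TVColor r k)
    (hi₁ : TVColor r i₁) (hi₂ : TVColor r i₂) (hj₁ : TVColor r j₁)
    (hj₂ : TVColor r j₂) (hk₁ : TVColor r k₁) (hk₂ : TVColor r k₂)
    (h1 : TVAdm r i j k) (h2 : TVAdm r i i₁ k₁) (h3 : TVAdm r i i₂ k₂)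
    (h4 : TVAdm r j i₁ j₁) (h5 : TVAdm r j i₂ j₂)
    (h6 : TVAdm r k j₁ k₁) (h7 : TVAdm r k j₂ k₂) :
    ∃ l : ℚ, TVColor r l ∧ TVAdm r i₁ i₂ l ∧ TVAdm r j₁ j₂ l ∧ TVAdm r k₁ k₂ l := by
  rcases le_total |j₁ - j₂| |i₁ - i₂| with hA | hA
  · rcases le_total |k₁ - k₂| |i₁ - i₂| with hB | hB
    · exact tv_aux2 r hr i j k i₁ i₂ j₁ j₂ k₁ k₂ hi hj hk hi₁ hi₂ hj₁ hj₂ hk₁ hk₂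
        h1 h2 h3 h4 h5 h6 h7 hA hB
    · -- |k₁ - k₂| is the largest; cycle twice
      obtain ⟨l, c, a1, a2, a3⟩ := tv_aux2 r hr k i j k₁ k₂ i₁ i₂ j₁ j₂ hk hi hj hk₁ hk₂
        hi₁ hi₂ hj₁ hj₂ h1.rot.rot h6.swap23 h7.swap23 h2.swap23 h3.swap23 h4 h5
        hB (le_trans hA hB)
      exact ⟨l, c, a2, a3, a1⟩
  · rcases le_total |k₁ - k₂| |j₁ - j₂| with hB | hB
    · -- |j₁ - j₂| is the largest; cycle once
      obtain ⟨l, c, a1, a2, a3⟩ := tv_aux2 r hr j k i j₁ j₂ k₁ k₂ i₁ i₂ hj hk hi hj₁ hj₂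
        hk₁ hk₂ hi₁ hi₂ h1.rot h4.swap23 h5.swap23 h6 h7 h2.swap23 h3.swap23 hB hA
      exact ⟨l, c, a3, a1, a2⟩
    · -- |k₁ - k₂| is the largest
      obtain ⟨l, c, a1, a2, a3⟩ := tv_aux2 r hr k i j k₁ k₂ i₁ i₂ j₁ j₂ hk hi hj hk₁ hk₂
        hi₁ hi₂ hj₁ hj₂ h1.rot.rot h6.swap23 h7.swap23 h2.swap23 h3.swap23 h4 h5
        (le_trans hA hB) hB
      exact ⟨l, c, a2, a3, a1⟩
end

section
/- Consider an abstract Turaev-Viro initial datum over a commutative ring K: a finite color set I, weights w_i ∈ K*, a set of admissible triples, and 6j-symbols with tetrahedral symmetries, satisfying the orthogonality condition (*), the Biedenharn-Elliot identity (**), and condition (****): Σ_k w_k = w_i w_j (sum over k with (i,j,k) admissible) for all i,j. Then for any admissible triples (i,i',i'') and (j,j',j''): Σ_{k,l,m,n} w_k w_l w_m w_n · |i'' j' l; j k j''| · |i'' j' l; m i i'| · |i i'' i'; j'' n k| · |m j' i'; j'' n j| · |i l m; j n k| = 1, with the sum over all k,l,m,n such that all involved symbols are defined. -/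
/-- A 6-tuple is admissible iff its four boundary triples are admissible. -/
abbrev Adm6 {I : Type*} (adm : I → I → I → Prop) (i j k l m n : I) : Prop :=
  adm i j k ∧ adm i m n ∧ adm j l n ∧ adm k l m

/-- Lemma "five-eq": for an abstract Turaev–Viro initial datum (finite color set `I`,
unit weights `w`, admissible triples, 6j-symbols with tetrahedral symmetries)
satisfying orthogonality (*), the Biedenharn–Elliot identity (**), and
condition (****), the displayed five-symbol state sum equals `1`. -/
theorem five_eq {K : Type*} [CommRing K] {I : Type*} [Fintype I] [DecidableEq I]
    (w : I → Kˣ) (adm : I → I → I → Prop) [∀ a b c, Decidable (adm a b c)]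
    (S : I → I → I → I → I → I → K)
    (hsym : ∀ i j k l m n : I,
      S i j k l m n = S j i k m l n ∧ S i j k l m n = S i k j l n m ∧
      S i j k l m n = S i m n l j k ∧ S i j k l m n = S l m k i j n ∧
      S i j k l m n = S l j n i m k)
    (horth : ∀ i' i'' j k l n : I, adm i' j k → adm i' l n → adm i'' j k → adm i'' l n →
      ∑ m ∈ Finset.univ.filter
          (fun m => Adm6 adm i' j k m l n ∧ Adm6 adm i'' j k m l n),
        (w m : K) * S i' j k m l n * S i'' j k m l n =
      if i' = i'' then (((w i')⁻¹ : Kˣ) : K) else 0)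
    (hBE : ∀ k k' k'' j j' j'' i i' i'' : I,
      Adm6 adm k k' k'' j j' j'' → Adm6 adm k k' k'' i i' i'' →
      S k k' k'' j j' j'' * S k k' k'' i i' i'' =
        ∑ n ∈ Finset.univ.filter (fun n => Adm6 adm j' k j'' i'' n i' ∧
            Adm6 adm j k' j'' i'' n i ∧ Adm6 adm j k'' j' i' n i),
          (w n : K) * S j' k j'' i'' n i' * S j k' j'' i'' n i * S j k'' j' i' n i)
    (hstar4 : ∀ i j : I,
      ∑ k ∈ Finset.univ.filter (fun k => adm i j k), (w k : K) = (w i : K) * (w j : K))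
    (i i' i'' j j' j'' : I) (h1 : adm i i' i'') (h2 : adm j j' j'') :
    ∑ x ∈ (Finset.univ : Finset (I × I × I × I)).filter
        (fun x => Adm6 adm i'' j' x.2.1 j x.1 j'' ∧ Adm6 adm i'' j' x.2.1 x.2.2.1 i i' ∧
          Adm6 adm i i'' i' j'' x.2.2.2 x.1 ∧ Adm6 adm x.2.2.1 j' i' j'' x.2.2.2 j ∧
          Adm6 adm i x.2.1 x.2.2.1 j x.2.2.2 x.1),
      (w x.1 : K) * (w x.2.1 : K) * (w x.2.2.1 : K) * (w x.2.2.2 : K) *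
        S i'' j' x.2.1 j x.1 j'' * S i'' j' x.2.1 x.2.2.1 i i' *
        S i i'' i' j'' x.2.2.2 x.1 * S x.2.2.1 j' i' j'' x.2.2.2 j *
        S i x.2.1 x.2.2.1 j x.2.2.2 x.1 = 1 := by
  by_cases htriv : (1 : K) = 0
  · have h0 : ∀ a : K, a = 0 := fun a => by rw [← mul_one a, htriv, mul_zero]
    exact (h0 _).trans (h0 1).symm
  -- nontrivial ring: units are nonzero
  have hu : ∀ u : Kˣ, (u : K) ≠ 0 := by
    intro u hu0
    exact htriv (by rw [← u.mul_inv, hu0, zero_mul])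
  -- every pair of colors extends to an admissible triple
  have hex : ∀ a b : I, ∃ c, adm a b c := by
    intro a b
    by_contra hno
    push_neg at hno
    have h4 := hstar4 a b
    rw [Finset.filter_false_of_mem (fun c _ => hno c), Finset.sum_empty] at h4
    exact hu (w a * w b) (by rw [Units.val_mul]; exact h4.symm)
  -- key derived fact: admissibility is invariant under transpositions
  have hswap : ∀ a b c : I, adm a b c → adm b a c ∧ adm a c b := by
    intro a b c h
    obtain ⟨d, hd⟩ := hex a a
    have ho := horth a a a d b c hd h hd h
    rw [if_pos rfl] at ho
    have hne : ∃ m ∈ Finset.univ.filter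
        (fun m => Adm6 adm a a d m b c ∧ Adm6 adm a a d m b c),
        (w m : K) * S a a d m b c * S a a d m b c ≠ 0 := by
      apply Finset.exists_ne_zero_of_sum_ne_zero
      rw [ho]; exact hu _
    obtain ⟨m₀, hm₀, hne₀⟩ := hne
    have h6 : Adm6 adm a a d m₀ b c := ((Finset.mem_filter.mp hm₀).2).1
    have hbe := hBE a a d m₀ b c m₀ b c h6 h6
    have hS : S a a d m₀ b c * S a a d m₀ b c ≠ 0 := by
      intro h0; apply hne₀; rw [mul_assoc, h0, mul_zero]
    have hnonempty : (Finset.univ.filter (fun n => Adm6 adm b a c c n b ∧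
        Adm6 adm m₀ a c c n m₀ ∧ Adm6 adm m₀ d b b n m₀)).Nonempty := by
      by_contra hemp
      rw [Finset.not_nonempty_iff_eq_empty] at hemp
      rw [hemp, Finset.sum_empty] at hbe
      exact hS hbe
    obtain ⟨n₀, hn₀⟩ := hnonempty
    have h7 : Adm6 adm b a c c n₀ b := (Finset.mem_filter.mp hn₀).2.1
    exact ⟨h7.1, h7.2.2.1⟩
  have s12 : ∀ a b c : I, adm a b c → adm b a c := fun a b c h => (hswap a b c h).1
  have s23 : ∀ a b c : I, adm a b c → adm a c b := fun a b c h => (hswap a b c h).2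
  have hii : adm i'' i i' := s23 _ _ _ (s12 _ _ _ (s23 _ _ _ (s12 _ _ _ h1)))
  have hjj : adm j' j j'' := s12 _ _ _ h2
  -- inner sum over n collapses by Biedenharn–Elliot
  have hinner : ∀ k l m : I,
      (∑ n : I, if (Adm6 adm i'' j' l j k j'' ∧ Adm6 adm i'' j' l m i i' ∧
          Adm6 adm i i'' i' j'' n k ∧ Adm6 adm m j' i' j'' n j ∧ Adm6 adm i l m j n k)
        then (w k : K) * (w l : K) * (w m : K) * (w n : K) *
          S i'' j' l j k j'' * S i'' j' l m i i' * S i i'' i' j'' n k *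
          S m j' i' j'' n j * S i l m j n k
        else 0) =
      (if (Adm6 adm i'' j' l j k j'' ∧ Adm6 adm i'' j' l m i i')
        then (w k : K) * (w l : K) * (w m : K) *
          (S i'' j' l j k j'' * S i'' j' l j k j'') *
          (S i'' j' l m i i' * S i'' j' l m i i')
        else 0) := by
    intro k l m
    by_cases hC : Adm6 adm i'' j' l j k j'' ∧ Adm6 adm i'' j' l m i i'
    · rw [if_pos hC]
      obtain ⟨hC1, hC2⟩ := hC
      obtain ⟨c11, c12, c13, c14⟩ := hC1
      obtain ⟨c21, c22, c23, c24⟩ := hC2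
      have Ha : Adm6 adm j' i'' l i m i' := ⟨s12 _ _ _ c21, c23, c22, s23 _ _ _ c24⟩
      have Hb : Adm6 adm j' i'' l k j j'' := ⟨s12 _ _ _ c11, c13, c12, s23 _ _ _ c14⟩
      have hbe := hBE j' i'' l i m i' k j j'' Ha Hb
      rw [(hsym j' i'' l i m i').1, (hsym j' i'' l k j j'').1, Finset.sum_filter] at hbe
      calc (∑ n : I, if (Adm6 adm i'' j' l j k j'' ∧ Adm6 adm i'' j' l m i i' ∧
              Adm6 adm i i'' i' j'' n k ∧ Adm6 adm m j' i' j'' n j ∧ Adm6 adm i l m j n k)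
            then (w k : K) * (w l : K) * (w m : K) * (w n : K) *
              S i'' j' l j k j'' * S i'' j' l m i i' * S i i'' i' j'' n k *
              S m j' i' j'' n j * S i l m j n k
            else 0)
          = ∑ n : I, ((w k : K) * (w l : K) * (w m : K) *
              S i'' j' l j k j'' * S i'' j' l m i i') *
              (if (Adm6 adm m j' i' j'' n j ∧ Adm6 adm i i'' i' j'' n k ∧
                  Adm6 adm i l m j n k)
                then (w n : K) * S m j' i' j'' n j * S i i'' i' j'' n k * S i l m j n k
                else 0) := by
            refine Finset.sum_congr rfl fun n _ => ?_
            by_cases hn : Adm6 adm i i'' i' j'' n k ∧ Adm6 adm m j' i' j'' n j ∧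
                Adm6 adm i l m j n k
            · rw [if_pos ⟨⟨c11, c12, c13, c14⟩, ⟨c21, c22, c23, c24⟩, hn.1, hn.2.1, hn.2.2⟩,
                if_pos ⟨hn.2.1, hn.1, hn.2.2⟩]
              ring
            · rw [if_neg (fun h => hn ⟨h.2.2.1, h.2.2.2.1, h.2.2.2.2⟩),
                if_neg (fun h => hn ⟨h.2.1, h.1, h.2.2⟩), mul_zero]
        _ = ((w k : K) * (w l : K) * (w m : K) *
              S i'' j' l j k j'' * S i'' j' l m i i') *
              ∑ n : I, (if (Adm6 adm m j' i' j'' n j ∧ Adm6 adm i i'' i' j'' n k ∧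
                  Adm6 adm i l m j n k)
                then (w n : K) * S m j' i' j'' n j * S i i'' i' j'' n k * S i l m j n k
                else 0) := by rw [← Finset.mul_sum]
        _ = ((w k : K) * (w l : K) * (w m : K) *
              S i'' j' l j k j'' * S i'' j' l m i i') *
              (S i'' j' l m i i' * S i'' j' l j k j'') := by rw [← hbe]
        _ = (w k : K) * (w l : K) * (w m : K) *
              (S i'' j' l j k j'' * S i'' j' l j k j'') *
              (S i'' j' l m i i' * S i'' j' l m i i') := by ring
    · rw [if_neg hC]
      exact Finset.sum_eq_zero fun n _ => if_neg (fun h => hC ⟨h.1, h.2.1⟩)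
  -- sum over m collapses by orthogonality
  have hstep2 : ∀ k l : I,
      (∑ m : I, if (Adm6 adm i'' j' l j k j'' ∧ Adm6 adm i'' j' l m i i')
        then (w k : K) * (w l : K) * (w m : K) *
          (S i'' j' l j k j'' * S i'' j' l j k j'') *
          (S i'' j' l m i i' * S i'' j' l m i i')
        else 0) =
      (if Adm6 adm i'' j' l j k j''
        then (w k : K) * (w l : K) *
          (S i'' j' l j k j'' * S i'' j' l j k j'') * (((w i'')⁻¹ : Kˣ) : K)
        else 0) := by
    intro k l
    by_cases hC1 : Adm6 adm i'' j' l j k j''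
    · rw [if_pos hC1]
      have ho := horth i'' i'' j' l i i' hC1.1 hii hC1.1 hii
      rw [if_pos rfl, Finset.sum_filter] at ho
      calc (∑ m : I, if (Adm6 adm i'' j' l j k j'' ∧ Adm6 adm i'' j' l m i i')
            then (w k : K) * (w l : K) * (w m : K) *
              (S i'' j' l j k j'' * S i'' j' l j k j'') *
              (S i'' j' l m i i' * S i'' j' l m i i')
            else 0)
          = ∑ m : I, ((w k : K) * (w l : K) *
              (S i'' j' l j k j'' * S i'' j' l j k j'')) *
              (if (Adm6 adm i'' j' l m i i' ∧ Adm6 adm i'' j' l m i i')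
                then (w m : K) * S i'' j' l m i i' * S i'' j' l m i i'
                else 0) := by
            refine Finset.sum_congr rfl fun m _ => ?_
            by_cases hm : Adm6 adm i'' j' l m i i'
            · rw [if_pos ⟨hC1, hm⟩, if_pos ⟨hm, hm⟩]; ring
            · rw [if_neg (fun h => hm h.2), if_neg (fun h => hm h.1), mul_zero]
        _ = ((w k : K) * (w l : K) * (S i'' j' l j k j'' * S i'' j' l j k j'')) *
              ∑ m : I, (if (Adm6 adm i'' j' l m i i' ∧ Adm6 adm i'' j' l m i i')
                then (w m : K) * S i'' j' l m i i' * S i'' j' l m i i'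
                else 0) := by rw [← Finset.mul_sum]
        _ = ((w k : K) * (w l : K) * (S i'' j' l j k j'' * S i'' j' l j k j'')) *
              (((w i'')⁻¹ : Kˣ) : K) := by rw [ho]
        _ = (w k : K) * (w l : K) *
              (S i'' j' l j k j'' * S i'' j' l j k j'') * (((w i'')⁻¹ : Kˣ) : K) := by
            ring
    · rw [if_neg hC1]
      exact Finset.sum_eq_zero fun m _ => if_neg (fun h => hC1 h.1)
  -- sum over k collapses by orthogonality
  have hstep3 : ∀ l : I,
      (∑ k : I, if Adm6 adm i'' j' l j k j''
        then (w k : K) * (w l : K) *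
          (S i'' j' l j k j'' * S i'' j' l j k j'') * (((w i'')⁻¹ : Kˣ) : K)
        else 0) =
      (if adm i'' j' l
        then (w l : K) * (((w i'')⁻¹ : Kˣ) : K) * (((w j')⁻¹ : Kˣ) : K)
        else 0) := by
    intro l
    by_cases hl : adm i'' j' l
    · rw [if_pos hl]
      have hl' : adm j' i'' l := s12 _ _ _ hl
      have ho := horth j' j' i'' l j j'' hl' hjj hl' hjj
      rw [if_pos rfl, Finset.sum_filter] at ho
      calc (∑ k : I, if Adm6 adm i'' j' l j k j''
            then (w k : K) * (w l : K) *
              (S i'' j' l j k j'' * S i'' j' l j k j'') * (((w i'')⁻¹ : Kˣ) : K)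
            else 0)
          = ∑ k : I, ((w l : K) * (((w i'')⁻¹ : Kˣ) : K)) *
              (if (Adm6 adm j' i'' l k j j'' ∧ Adm6 adm j' i'' l k j j'')
                then (w k : K) * S j' i'' l k j j'' * S j' i'' l k j j''
                else 0) := by
            refine Finset.sum_congr rfl fun k _ => ?_
            by_cases hk : Adm6 adm j' i'' l k j j''
            · rw [if_pos ⟨hl, hk.2.2.1, hjj, s23 _ _ _ hk.2.2.2⟩, if_pos ⟨hk, hk⟩,
                ← (hsym i'' j' l j k j'').1]
              ring
            · rw [if_neg (fun h => hk ⟨s12 _ _ _ h.1, h.2.2.1, h.2.1, s23 _ _ _ h.2.2.2⟩),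
                if_neg (fun h => hk h.1), mul_zero]
        _ = ((w l : K) * (((w i'')⁻¹ : Kˣ) : K)) *
              ∑ k : I, (if (Adm6 adm j' i'' l k j j'' ∧ Adm6 adm j' i'' l k j j'')
                then (w k : K) * S j' i'' l k j j'' * S j' i'' l k j j''
                else 0) := by rw [← Finset.mul_sum]
        _ = ((w l : K) * (((w i'')⁻¹ : Kˣ) : K)) * (((w j')⁻¹ : Kˣ) : K) := by rw [ho]
        _ = (w l : K) * (((w i'')⁻¹ : Kˣ) : K) * (((w j')⁻¹ : Kˣ) : K) := by ring
    · rw [if_neg hl]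
      exact Finset.sum_eq_zero fun k _ => if_neg (fun h => hl h.1)
  -- assemble
  calc ∑ x ∈ (Finset.univ : Finset (I × I × I × I)).filter
        (fun x => Adm6 adm i'' j' x.2.1 j x.1 j'' ∧ Adm6 adm i'' j' x.2.1 x.2.2.1 i i' ∧
          Adm6 adm i i'' i' j'' x.2.2.2 x.1 ∧ Adm6 adm x.2.2.1 j' i' j'' x.2.2.2 j ∧
          Adm6 adm i x.2.1 x.2.2.1 j x.2.2.2 x.1),
      (w x.1 : K) * (w x.2.1 : K) * (w x.2.2.1 : K) * (w x.2.2.2 : K) *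
        S i'' j' x.2.1 j x.1 j'' * S i'' j' x.2.1 x.2.2.1 i i' *
        S i i'' i' j'' x.2.2.2 x.1 * S x.2.2.1 j' i' j'' x.2.2.2 j *
        S i x.2.1 x.2.2.1 j x.2.2.2 x.1
      = ∑ k : I, ∑ l : I, ∑ m : I, ∑ n : I,
        (if (Adm6 adm i'' j' l j k j'' ∧ Adm6 adm i'' j' l m i i' ∧
            Adm6 adm i i'' i' j'' n k ∧ Adm6 adm m j' i' j'' n j ∧ Adm6 adm i l m j n k)
          then (w k : K) * (w l : K) * (w m : K) * (w n : K) *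
            S i'' j' l j k j'' * S i'' j' l m i i' * S i i'' i' j'' n k *
            S m j' i' j'' n j * S i l m j n k
          else 0) := by
        rw [Finset.sum_filter, Fintype.sum_prod_type]
        refine Finset.sum_congr rfl fun k _ => ?_
        rw [Fintype.sum_prod_type]
        refine Finset.sum_congr rfl fun l _ => ?_
        rw [Fintype.sum_prod_type]
    _ = ∑ k : I, ∑ l : I, ∑ m : I,
        (if (Adm6 adm i'' j' l j k j'' ∧ Adm6 adm i'' j' l m i i')
          then (w k : K) * (w l : K) * (w m : K) *
            (S i'' j' l j k j'' * S i'' j' l j k j'') *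
            (S i'' j' l m i i' * S i'' j' l m i i')
          else 0) :=
        Finset.sum_congr rfl fun k _ => Finset.sum_congr rfl fun l _ =>
          Finset.sum_congr rfl fun m _ => hinner k l m
    _ = ∑ k : I, ∑ l : I,
        (if Adm6 adm i'' j' l j k j''
          then (w k : K) * (w l : K) *
            (S i'' j' l j k j'' * S i'' j' l j k j'') * (((w i'')⁻¹ : Kˣ) : K)
          else 0) :=
        Finset.sum_congr rfl fun k _ => Finset.sum_congr rfl fun l _ => hstep2 k l
    _ = ∑ l : I, ∑ k : I,
        (if Adm6 adm i'' j' l j k j''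
          then (w k : K) * (w l : K) *
            (S i'' j' l j k j'' * S i'' j' l j k j'') * (((w i'')⁻¹ : Kˣ) : K)
          else 0) := Finset.sum_comm
    _ = ∑ l : I,
        (if adm i'' j' l
          then (w l : K) * (((w i'')⁻¹ : Kˣ) : K) * (((w j')⁻¹ : Kˣ) : K)
          else 0) := Finset.sum_congr rfl fun l _ => hstep3 l
    _ = (∑ l : I, if adm i'' j' l then (w l : K) else 0) *
          ((((w i'')⁻¹ : Kˣ) : K) * (((w j')⁻¹ : Kˣ) : K)) := by
        rw [Finset.sum_mul]
        refine Finset.sum_congr rfl fun l _ => ?_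
        by_cases hl : adm i'' j' l
        · rw [if_pos hl, if_pos hl]; ring
        · rw [if_neg hl, if_neg hl, zero_mul]
    _ = ((w i'' : K) * (w j' : K)) *
          ((((w i'')⁻¹ : Kˣ) : K) * (((w j')⁻¹ : Kˣ) : K)) := by
        rw [← Finset.sum_filter, hstar4]
    _ = ((w i'' : K) * (((w i'')⁻¹ : Kˣ) : K)) *
          ((w j' : K) * (((w j')⁻¹ : Kˣ) : K)) := by ring
    _ = 1 := by rw [Units.mul_inv, Units.mul_inv, one_mul]
end

section
/- For an integer r ≥ 3 and a primitive-type root of unity q of degree 2r (with q² a primitive r-th root of unity), the quantum integer [n] = (qⁿ − q^{-n})/(q − q^{-1}) satisfies: (w_i w_j)^{-1} = |0 i i; k j j|², equivalently Σ_k w_k/(w_i w_j) = 1 summed over all k ∈ {0,1/2,...,(r-2)/2} such that (i,j,k) is admissible, where w_i = (-1)^{2i}[2i+1]; i.e., Σ_k (-1)^{2k}[2k+1] = (-1)^{2i+2j}[2i+1][2j+1] with the sum over admissible k. -/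
/-- The quantum integer `[n] = (qⁿ - q⁻ⁿ)/(q - q⁻¹)`. -/
noncomputable def qInt (q : ℂ) (n : ℤ) : ℂ := (q ^ n - q ^ (-n)) / (q - q⁻¹)

/-- `2x` as an integer, for a half-integer `x` (so that `2x ∈ ℤ`). -/
def twiceZ (x : ℚ) : ℤ := (2 * x).num

/-- The weight `w_i = (-1)^{2i} [2i+1]` of the Turaev–Viro datum. -/
noncomputable def tvW (q : ℂ) (x : ℚ) : ℂ :=
  (-1 : ℂ) ^ (twiceZ x) * qInt q (twiceZ x + 1)

/-- The color set `{0, 1/2, ..., (r-2)/2}` as a finite set of rationals. -/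
def tvColors (r : ℕ) : Finset ℚ := (Finset.range (r - 1)).image (fun a : ℕ => (a : ℚ) / 2)


lemma step_lem (q : ℂ) (hq0 : q ≠ 0) (n : ℤ) :
    (q - q⁻¹) * (q ^ (n+1) - q ^ (-(n+1))) = (q ^ (n+2) + q ^ (-(n+2))) - (q ^ n + q ^ (-n)) := by
  have h : ∀ m k : ℤ, q ^ (m + k) = q ^ m * q ^ k := fun m k => zpow_add₀ hq0 m k
  have hn : q ^ n ≠ 0 := zpow_ne_zero _ hq0
  simp only [neg_add, h, zpow_neg, zpow_one, zpow_two]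
  field_simp
  ring

lemma key_sum (q : ℂ) (hq0 : q ≠ 0) (hD : q - q⁻¹ ≠ 0) (a b T : ℕ)
    (hM : q ^ (((b:ℤ) - a) + 2*T + 2) + q ^ (-(((b:ℤ) - a) + 2*T + 2))
        = q ^ ((a:ℤ) + b + 2) + q ^ (-((a:ℤ) + b + 2))) :
    ∑ t ∈ Finset.range (T+1), qInt q ((b:ℤ) - a + 2*t + 1)
      = qInt q ((a:ℤ)+1) * qInt q ((b:ℤ)+1) := by
  have hD2 : (q - q⁻¹)^2 ≠ 0 := pow_ne_zero _ hD
  apply mul_left_cancel₀ hD2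
  have hmul : ∀ n : ℤ, (q - q⁻¹) * qInt q n = q ^ n - q ^ (-n) := by
    intro n; rw [qInt, mul_div_cancel₀ _ hD]
  set d : ℤ := (b:ℤ) - a with hd
  set F : ℕ → ℂ := fun t => q ^ (d + 2*t) + q ^ (-(d + 2*t)) with hF
  have hterm : ∀ t : ℕ, (q - q⁻¹)^2 * qInt q (d + 2*t + 1) = F (t+1) - F t := by
    intro t
    rw [sq, mul_assoc, hmul]
    have := step_lem q hq0 (d + 2*t)
    rw [this]
    simp only [hF]
    push_cast
    ring_nf
  calc (q - q⁻¹)^2 * ∑ t ∈ Finset.range (T+1), qInt q (d + 2*t + 1)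
      = ∑ t ∈ Finset.range (T+1), (F (t+1) - F t) := by
        rw [Finset.mul_sum]; exact Finset.sum_congr rfl fun t _ => hterm t
    _ = F (T+1) - F 0 := Finset.sum_range_sub F (T+1)
    _ = (q - q⁻¹)^2 * (qInt q ((a:ℤ)+1) * qInt q ((b:ℤ)+1)) := by
        rw [show (q - q⁻¹)^2 * (qInt q ((a:ℤ)+1) * qInt q ((b:ℤ)+1))
            = ((q - q⁻¹) * qInt q ((a:ℤ)+1)) * ((q - q⁻¹) * qInt q ((b:ℤ)+1)) by ring,
          hmul, hmul]
        simp only [hF]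
        push_cast
        rw [show d + 2*((T:ℤ)+1) = d + 2*T + 2 by ring]
        rw [hM]
        have h : ∀ m k : ℤ, q ^ (m + k) = q ^ m * q ^ k := fun m k => zpow_add₀ hq0 m k
        set A := q ^ (a:ℤ) with hA
        set B := q ^ (b:ℤ) with hB
        have ha : A ≠ 0 := zpow_ne_zero _ hq0
        have hb : B ≠ 0 := zpow_ne_zero _ hq0
        have h2 : q ^ (2:ℤ) = q^2 := by norm_cast
        have hd0 : q ^ d = B * A⁻¹ := by rw [hd, sub_eq_add_neg, h, zpow_neg]
        have eA : q ^ ((a:ℤ)+b+2) = A*B*q^2 := by rw [h, h, h2]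
        have eA' : q ^ (-((a:ℤ)+b+2)) = (A*B*q^2)⁻¹ := by rw [zpow_neg, eA]
        have ed' : q ^ (-d) = A * B⁻¹ := by
          rw [zpow_neg, hd0, mul_inv_rev, inv_inv]
        have ea1 : q ^ ((a:ℤ)+1) = A*q := by rw [h, zpow_one]
        have ea1' : q ^ (-((a:ℤ)+1)) = (A*q)⁻¹ := by rw [zpow_neg, ea1]
        have eb1 : q ^ ((b:ℤ)+1) = B*q := by rw [h, zpow_one]
        have eb1' : q ^ (-((b:ℤ)+1)) = (B*q)⁻¹ := by rw [zpow_neg, eb1]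
        simp only [add_zero]
        rw [eA, eA', hd0, ed', ea1, ea1', eb1, eb1']
        field_simp
        ring

lemma neg_one_pow_congr_nat (m n : ℕ) (h : m % 2 = n % 2) : ((-1:ℂ))^m = (-1)^n := by
  conv_lhs => rw [← Nat.div_add_mod m 2]
  conv_rhs => rw [← Nat.div_add_mod n 2]
  simp [pow_add, pow_mul, neg_one_sq, h]

lemma nat_goal (r : ℕ) (hr : 3 ≤ r) (q : ℂ) (hq0 : q ≠ 0) (hD : q - q⁻¹ ≠ 0)
    (hq : q ^ (2*r) = 1) (a b : ℕ) (hab : a ≤ b) (hbr : b ≤ r - 2) :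
    ∑ c ∈ (Finset.range (r-1)).filter
        (fun c => a ≤ b + c ∧ b ≤ c + a ∧ c ≤ a + b ∧ 2 ∣ (a+b+c) ∧ a+b+c+4 ≤ 2*r),
        ((-1:ℂ)^c * qInt q ((c:ℤ)+1))
    = ((-1:ℂ)^a * qInt q ((a:ℤ)+1)) * ((-1:ℂ)^b * qInt q ((b:ℤ)+1)) := by
  set T := min a (r - 2 - b) with hT
  have hset : (Finset.range (r-1)).filter
        (fun c => a ≤ b + c ∧ b ≤ c + a ∧ c ≤ a + b ∧ 2 ∣ (a+b+c) ∧ a+b+c+4 ≤ 2*r)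
      = (Finset.range (T+1)).image (fun t => b - a + 2*t) := by
    ext c
    simp only [Finset.mem_filter, Finset.mem_range, Finset.mem_image]
    constructor
    · rintro ⟨hc, h1, h2, h3, h4, h5⟩
      exact ⟨(c - (b - a))/2, by omega, by omega⟩
    · rintro ⟨t, ht, rfl⟩
      omega
  rw [hset, Finset.sum_image (by intro x _ y _ h; simp only at h; omega)]
  have hcast : ∀ t : ℕ, ((b - a + 2*t : ℕ) : ℤ) = (b:ℤ) - a + 2*t := by
    intro t; omega
  have hsign : ∀ t : ℕ, ((-1:ℂ))^(b - a + 2*t) = (-1)^a * (-1)^b := by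
    intro t
    rw [← pow_add]
    exact neg_one_pow_congr_nat _ _ (by omega)
  have hterm : ∀ t ∈ Finset.range (T+1),
      ((-1:ℂ))^(b - a + 2*t) * qInt q (((b - a + 2*t : ℕ):ℤ)+1)
      = ((-1:ℂ)^a * (-1)^b) * qInt q ((b:ℤ) - a + 2*t + 1) := by
    intro t _
    rw [hsign, hcast]
  rw [Finset.sum_congr rfl hterm, ← Finset.mul_sum]
  have hM : q ^ (((b:ℤ) - a) + 2*T + 2) + q ^ (-(((b:ℤ) - a) + 2*T + 2))
      = q ^ ((a:ℤ) + b + 2) + q ^ (-((a:ℤ) + b + 2)) := by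
    rcases le_or_gt a (r - 2 - b) with hcase | hcase
    · have hTe : T = a := by omega
      rw [hTe, show (b:ℤ) - a + 2*(a:ℤ) + 2 = (a:ℤ)+b+2 by ring]
    · have hTe : T = r - 2 - b := by omega
      have hz : q ^ (2*(r:ℤ)) = 1 := by
        have h' := hq
        rw [← zpow_natCast q (2*r)] at h'
        push_cast at h'
        exact h'
      have e : (b:ℤ) - a + 2*(T:ℤ) + 2 = 2*(r:ℤ) - ((a:ℤ)+b+2) := by
        rw [hTe]; omega
      rw [e]
      set s : ℤ := (a:ℤ) + b + 2 with hs
      have h1 : q ^ (2*(r:ℤ) - s) = q ^ (-s) := by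
        rw [sub_eq_add_neg, zpow_add₀ hq0, hz, one_mul]
      have h2 : q ^ (-(2*(r:ℤ) - s)) = q ^ s := by
        rw [neg_sub, sub_eq_add_neg, zpow_add₀ hq0, zpow_neg, hz, inv_one, mul_one]
      rw [h1, h2, add_comm]
  rw [key_sum q hq0 hD a b T hM]
  ring


lemma nat_goal' (r : ℕ) (hr : 3 ≤ r) (q : ℂ) (hq0 : q ≠ 0) (hD : q - q⁻¹ ≠ 0)
    (hq : q ^ (2*r) = 1) (a b : ℕ) (har : a ≤ r - 2) (hbr : b ≤ r - 2) :
    ∑ c ∈ (Finset.range (r-1)).filter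
        (fun c => a ≤ b + c ∧ b ≤ c + a ∧ c ≤ a + b ∧ 2 ∣ (a+b+c) ∧ a+b+c+4 ≤ 2*r),
        ((-1:ℂ)^c * qInt q ((c:ℤ)+1))
    = ((-1:ℂ)^a * qInt q ((a:ℤ)+1)) * ((-1:ℂ)^b * qInt q ((b:ℤ)+1)) := by
  rcases le_total a b with h | h
  · exact nat_goal r hr q hq0 hD hq a b h hbr
  · have hsym := nat_goal r hr q hq0 hD hq b a h har
    rw [Finset.filter_congr (fun c _ => by
      constructor <;> rintro ⟨h1, h2, h3, h4, h5⟩ <;> exact ⟨by omega, by omega, by omega, by omega, by omega⟩ :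
      ∀ c ∈ Finset.range (r-1),
        (a ≤ b + c ∧ b ≤ c + a ∧ c ≤ a + b ∧ 2 ∣ (a+b+c) ∧ a+b+c+4 ≤ 2*r) ↔
        (b ≤ a + c ∧ a ≤ c + b ∧ c ≤ b + a ∧ 2 ∣ (b+a+c) ∧ b+a+c+4 ≤ 2*r))]
    rw [hsym, mul_comm]

lemma twiceZ_half (n : ℕ) : twiceZ ((n : ℚ)/2) = (n : ℤ) := by
  unfold twiceZ
  rw [show (2 * ((n:ℚ)/2)) = (n:ℚ) by ring]
  exact Rat.num_natCast n

lemma tvW_half (q : ℂ) (n : ℕ) : tvW q ((n:ℚ)/2) = (-1:ℂ)^n * qInt q ((n:ℤ)+1) := by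
  rw [tvW, twiceZ_half, zpow_natCast]

lemma TVColor_elim {r : ℕ} {x : ℚ} (h : TVColor r x) : ∃ a : ℕ, x = (a:ℚ)/2 ∧ a + 2 ≤ r := by
  obtain ⟨⟨a, rfl⟩, hle⟩ := h
  refine ⟨a, rfl, ?_⟩
  have h2 : (a:ℚ) ≤ (r:ℚ) - 2 := by linarith [(div_le_div_iff_of_pos_right (by norm_num : (0:ℚ) < 2)).mp hle]
  have : (a:ℚ) + 2 ≤ (r:ℚ) := by linarith
  exact_mod_cast this

open Classical in
/-- Condition (****) for the Turaev–Viro datum of order `r`: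
`Σ_k (-1)^{2k}[2k+1] = (-1)^{2i+2j}[2i+1][2j+1]`, the sum being over all colors `k`
with `(i,j,k)` admissible. -/
theorem tv_condition_four_star (r : ℕ) (hr : 3 ≤ r) (q : ℂ)
    (hq : q ^ (2 * r) = 1) (hq2 : IsPrimitiveRoot (q ^ 2) r)
    (i j : ℚ) (hi : TVColor r i) (hj : TVColor r j) :
    ∑ k ∈ (tvColors r).filter (fun k => TVAdm r i j k), tvW q k = tvW q i * tvW q j := by
  obtain ⟨a, rfl, har⟩ := TVColor_elim hi
  obtain ⟨b, rfl, hbr⟩ := TVColor_elim hj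
  have hq0 : q ≠ 0 := by
    intro h
    rw [h, zero_pow (by omega : 2*r ≠ 0)] at hq
    exact one_ne_zero hq.symm
  have hq21 : q^2 ≠ 1 := hq2.ne_one (by omega)
  have hD : q - q⁻¹ ≠ 0 := by
    intro h
    apply hq21
    have hqq : q = q⁻¹ := by linear_combination h
    calc q^2 = q * q := sq q
    _ = q * q⁻¹ := by rw [← hqq]
    _ = 1 := mul_inv_cancel₀ hq0
  rw [tvColors, Finset.filter_image,
    Finset.sum_image (by intro x _ y _ h; field_simp at h; exact_mod_cast h)]
  have hfilter : (Finset.range (r-1)).filter (fun c : ℕ => TVAdm r ((a:ℚ)/2) ((b:ℚ)/2) ((c:ℚ)/2))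
      = (Finset.range (r-1)).filter
        (fun c => a ≤ b + c ∧ b ≤ c + a ∧ c ≤ a + b ∧ 2 ∣ (a+b+c) ∧ a+b+c+4 ≤ 2*r) := by
    apply Finset.filter_congr
    intro c _
    unfold TVAdm
    constructor
    · rintro ⟨h1, h2, h3, ⟨n, hn⟩, h5⟩
      have c1 : (a:ℚ) ≤ b + c := by linarith
      have c2 : (b:ℚ) ≤ c + a := by linarith
      have c3 : (c:ℚ) ≤ a + b := by linarith
      have c4 : ((a:ℚ)) + b + c = 2*n := by linarith
      have c5 : ((a:ℚ)) + b + c + 4 ≤ 2*r := by linarith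
      have c4' : a + b + c = 2*n := by exact_mod_cast c4
      refine ⟨by exact_mod_cast c1, by exact_mod_cast c2, by exact_mod_cast c3,
        ⟨n, by omega⟩, by exact_mod_cast c5⟩
    · rintro ⟨h1, h2, h3, ⟨n, hn⟩, h5⟩
      have c1 : (a:ℚ) ≤ b + c := by exact_mod_cast h1
      have c2 : (b:ℚ) ≤ c + a := by exact_mod_cast h2
      have c3 : (c:ℚ) ≤ a + b := by exact_mod_cast h3
      have c4 : ((a:ℚ)) + b + c = 2*n := by exact_mod_cast congrArg (fun x : ℕ => (x:ℚ)) hn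
      have c5 : ((a:ℚ)) + b + c + 4 ≤ 2*r := by exact_mod_cast h5
      exact ⟨by linarith, by linarith, by linarith, ⟨n, by linarith⟩, by linarith⟩
  rw [hfilter]
  simp only [tvW_half]
  exact nat_goal' r hr q hq0 hD hq a b (by omega) (by omega)
end

section
/- Let ε ∈ ℂ with ε² = ε + 1, weights w_0 = 1, w_1 = ε, and 6j-symbols |0 0 0; 0 0 0| = 1, |0 0 0; 1 1 1| = ε^{-1/2}, |0 1 1; 0 1 1| = ε^{-1}, |0 1 1; 1 1 1| = ε^{-1}, |1 1 1; 1 1 1| = -ε^{-2}. Then w_0·|1 1 1; 0 1 1|² + w_1·|1 1 1; 1 1 1|² = ε^{-1}, and |0 1 1; 0 1 1|·|1 1 1; 0 1 1| + w_1·|0 1 1; 1 1 1|·|1 1 1; 1 1 1| = 0. -/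
/-- Admissibility of a triple of colors in `{0,1}` (triangle inequalities). -/
abbrev EpsAdm (i j k : Fin 2) : Prop :=
  (i : ℕ) ≤ (j : ℕ) + (k : ℕ) ∧ (j : ℕ) ≤ (k : ℕ) + (i : ℕ) ∧ (k : ℕ) ≤ (i : ℕ) + (j : ℕ)

/-- Admissibility of a 6-tuple: the four boundary triples of the tetrahedron are admissible. -/
abbrev EpsAdm6 (i j k l m n : Fin 2) : Prop :=
  EpsAdm i j k ∧ EpsAdm i m n ∧ EpsAdm j l n ∧ EpsAdm k l m

/-- The weights of the ε-datum: `w 0 = 1`, `w 1 = ε`. -/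
def epsW (ε : ℂ) (i : Fin 2) : ℂ := if i = 0 then 1 else ε

/-- The 6j-symbols `|i j k; l m n|` of the ε-datum, where `h` is a fixed square root
of `ε`.  On admissible 6-tuples the value depends only on the number of colors equal
to `1`, which realizes the five listed values together with their tetrahedral
symmetries:  `|0 0 0; 0 0 0| = 1`, `|0 0 0; 1 1 1| = ε^{-1/2}`,
`|0 1 1; 0 1 1| = ε⁻¹`, `|0 1 1; 1 1 1| = ε⁻¹`, `|1 1 1; 1 1 1| = -ε⁻²`. -/
noncomputable def epsSym (ε h : ℂ) (i j k l m n : Fin 2) : ℂ :=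
  let t : ℕ := (i : ℕ) + (j : ℕ) + (k : ℕ) + (l : ℕ) + (m : ℕ) + (n : ℕ)
  if t = 0 then 1 else if t = 3 then h⁻¹ else if t = 6 then -(ε ^ 2)⁻¹ else ε⁻¹


/-- Two key instances of the orthogonality condition (*) for the ε-datum:
`w₀·|1 1 1; 0 1 1|² + w₁·|1 1 1; 1 1 1|² = ε⁻¹` and
`|0 1 1; 0 1 1|·|1 1 1; 0 1 1| + w₁·|0 1 1; 1 1 1|·|1 1 1; 1 1 1| = 0`. -/
theorem eps_orthogonality_key_cases (ε h : ℂ) (hε : ε ^ 2 = ε + 1) (hh : h ^ 2 = ε) :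
    epsW ε 0 * (epsSym ε h 1 1 1 0 1 1) ^ 2 + epsW ε 1 * (epsSym ε h 1 1 1 1 1 1) ^ 2 = ε⁻¹ ∧
    epsSym ε h 0 1 1 0 1 1 * epsSym ε h 1 1 1 0 1 1 +
      epsW ε 1 * epsSym ε h 0 1 1 1 1 1 * epsSym ε h 1 1 1 1 1 1 = 0 := by
  have hne : ε ≠ 0 := by
    intro h0
    rw [h0] at hε
    norm_num at hε
  constructor
  · show 1 * (ε⁻¹) ^ 2 + ε * (-(ε ^ 2)⁻¹) ^ 2 = ε⁻¹
    field_simp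
    linear_combination -hε
  · show ε⁻¹ * ε⁻¹ + ε * ε⁻¹ * (-(ε ^ 2)⁻¹) = 0
    field_simp
    ring
end

section
/- Fix an integer r ≥ 3 and the set I = {0, 1/2, ..., (r-2)/2} with the Turaev-Viro admissibility (triangle inequalities, integral sum, sum ≤ r−2). If the seven triples (i,j,k), (i,i₁,k₁), (i,i₂,k₂), (j,i₁,j₁), (j,i₂,j₂), (k,j₁,k₁), (k,j₂,k₂) are admissible and k₁ − k₂ = max{|i₁−i₂|, |j₁−j₂|, |k₁−k₂|}, then k₁ − k₂ ≤ min{i₁+i₂, j₁+j₂, k₁+k₂} and k₁ − k₂ + max{i₁+i₂, j₁+j₂, k₁+k₂} ≤ r − 2. -/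
/-- The inequality core of condition (iii) of strong irreducibility for the
Turaev–Viro datum of order `r`. -/
theorem tv_iii_inequalities (r : ℕ) (hr : 3 ≤ r)
    (i j k i₁ i₂ j₁ j₂ k₁ k₂ : ℚ)
    (hi : TVColor r i) (hj : TVColor r j) (hk : TVColor r k)
    (hi₁ : TVColor r i₁) (hi₂ : TVColor r i₂) (hj₁ : TVColor r j₁)
    (hj₂ : TVColor r j₂) (hk₁ : TVColor r k₁) (hk₂ : TVColor r k₂)
    (h1 : TVAdm r i j k) (h2 : TVAdm r i i₁ k₁) (h3 : TVAdm r i i₂ k₂)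
    (h4 : TVAdm r j i₁ j₁) (h5 : TVAdm r j i₂ j₂)
    (h6 : TVAdm r k j₁ k₁) (h7 : TVAdm r k j₂ k₂)
    (hmax : k₁ - k₂ = max (|i₁ - i₂|) (max (|j₁ - j₂|) (|k₁ - k₂|))) :
    k₁ - k₂ ≤ min (i₁ + i₂) (min (j₁ + j₂) (k₁ + k₂)) ∧
      k₁ - k₂ + max (i₁ + i₂) (max (j₁ + j₂) (k₁ + k₂)) ≤ (r : ℚ) - 2 := by
  obtain ⟨⟨n2, hn2⟩, -⟩ := hk₂
  have hk2nn : (0:ℚ) ≤ k₂ := by rw [hn2]; positivity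
  obtain ⟨t21, t22, t23, -, s2⟩ := h2
  obtain ⟨t31, t32, t33, -, s3⟩ := h3
  obtain ⟨t61, t62, t63, -, s6⟩ := h6
  obtain ⟨t71, t72, t73, -, s7⟩ := h7
  refine ⟨le_min ?_ (le_min ?_ ?_), ?_⟩
  · linarith
  · linarith
  · linarith
  · rcases max_cases (i₁ + i₂) (max (j₁ + j₂) (k₁ + k₂)) with ⟨h, _⟩ | ⟨h, _⟩
    · rw [h]; linarith
    · rw [h]
      rcases max_cases (j₁ + j₂) (k₁ + k₂) with ⟨h', _⟩ | ⟨h', _⟩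
      · rw [h']; linarith
      · rw [h']; linarith
end
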